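/- Let c : ℕ → ℂ and φ : ℂ → ℂ be such that for every w ∈ ℂ, HasSum (fun n => c(n) * w^n) (φ(w)), and such that c(n) = 0 for all odd n. Let a > 0 and r > 0 be real, and define f_a : ℂ → ℂ by f_a(z) = cos(a(z - ir))·cos(a(z + ir)). Then for every z ∈ ℂ, HasSum (fun n => c(n) * iteratedDeriv n f_a z) ((φ(2a*I) * Complex.cos(2*a*z) + φ(0) * Complex.cosh(2*a*r)) / 2). -/

import Mathlib

open Complex

theorem operator_on_extremal_function (c : ℕ → ℂ) (φ : ℂ → ℂ)
    (hφ : ∀ w : ℂ, HasSum (fun n : ℕ => c n * w ^ n) (φ w))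
    (hodd : ∀ n : ℕ, Odd n → c n = 0) (a r : ℝ) (ha : 0 < a) (hr : 0 < r)
    (f_a : ℂ → ℂ)
    (hf_a : ∀ z : ℂ, f_a z = Complex.cos ((a : ℂ) * (z - Complex.I * (r : ℂ)))
        * Complex.cos ((a : ℂ) * (z + Complex.I * (r : ℂ)))) (z : ℂ) :
    HasSum (fun n : ℕ => c n * iteratedDeriv n f_a z)
      ((φ (2 * (a : ℂ) * Complex.I) * Complex.cos (2 * (a : ℂ) * z)
        + φ 0 * Complex.cosh (2 * (a : ℂ) * (r : ℂ))) / 2) := by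
  set b : ℂ := 2 * (a : ℂ) * Complex.I with hb
  have hcc : ∀ A B : ℂ, Complex.cos A * Complex.cos B
      = (Complex.cos (A + B) + Complex.cos (A - B)) / 2 := by
    intro A B; rw [Complex.cos_add, Complex.cos_sub]; ring
  have hcos : ∀ w : ℂ, Complex.cos (2 * (a : ℂ) * w)
      = (Complex.exp (b * w) + Complex.exp (-(b * w))) / 2 := by
    intro w
    rw [Complex.cos, show (2 * (a : ℂ) * w) * Complex.I = b * w by rw [hb]; ring,
      show -(2 * (a : ℂ) * w) * Complex.I = -(b * w) by rw [hb]; ring]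
  have hfa : f_a = fun w => (Complex.exp (b * w) + Complex.exp (-(b * w))) / 4
      + Complex.cosh (2 * (a : ℂ) * (r : ℝ)) / 2 := by
    funext w
    rw [hf_a w, hcc,
      show (a : ℂ) * (w - Complex.I * r) + (a : ℂ) * (w + Complex.I * r)
        = 2 * (a : ℂ) * w by ring,
      show (a : ℂ) * (w - Complex.I * r) - (a : ℂ) * (w + Complex.I * r)
        = -((2 * (a : ℂ) * (r : ℂ)) * Complex.I) by ring,
      Complex.cos_neg, Complex.cos_mul_I, hcos]
    ring
  have hderiv : ∀ n : ℕ, iteratedDeriv n f_a = fun w =>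
      (b ^ n * Complex.exp (b * w) + (-b) ^ n * Complex.exp (-(b * w))) / 4
      + (if n = 0 then Complex.cosh (2 * (a : ℂ) * (r : ℝ)) / 2 else 0) := by
    intro n
    induction n with
    | zero =>
      funext w
      simp [iteratedDeriv_zero, hfa]
    | succ n ih =>
      rw [iteratedDeriv_succ, ih]
      funext w
      have e1 : HasDerivAt (fun w : ℂ => Complex.exp (b * w))
          (Complex.exp (b * w) * (b * 1)) w := ((hasDerivAt_id w).const_mul b).cexp
      have e2 : HasDerivAt (fun w : ℂ => Complex.exp (-(b * w)))
          (Complex.exp (-(b * w)) * (-(b * 1))) w :=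
        ((hasDerivAt_id w).const_mul b).neg.cexp
      have H := (((e1.const_mul (b ^ n)).add (e2.const_mul ((-b) ^ n))).div_const 4).add_const
        (if n = 0 then Complex.cosh (2 * (a : ℂ) * (r : ℝ)) / 2 else 0)
      have H' : HasDerivAt (fun w : ℂ =>
          (b ^ n * Complex.exp (b * w) + (-b) ^ n * Complex.exp (-(b * w))) / 4
          + (if n = 0 then Complex.cosh (2 * (a : ℂ) * (r : ℝ)) / 2 else 0))
          ((b ^ (n + 1) * Complex.exp (b * w) + (-b) ^ (n + 1) * Complex.exp (-(b * w))) / 4)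
          w := by
        exact H.congr_deriv (by rw [pow_succ, pow_succ]; ring)
      rw [H'.deriv]
      simp
  have key : ∀ n : ℕ, c n * iteratedDeriv n f_a z
      = (c n * b ^ n) * (Complex.cos (2 * (a : ℂ) * z) / 2)
        + (c n * (0 : ℂ) ^ n) * (Complex.cosh (2 * (a : ℂ) * (r : ℝ)) / 2) := by
    intro n
    rcases Nat.even_or_odd n with he | ho
    · rw [hderiv n, hcos]
      rcases eq_or_ne n 0 with rfl | hn
      · simp; ring
      · rw [he.neg_pow, if_neg hn, zero_pow hn]
        ring
    · simp [hodd n ho]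
  have hs := ((hφ b).mul_right (Complex.cos (2 * (a : ℂ) * z) / 2)).add
    ((hφ 0).mul_right (Complex.cosh (2 * (a : ℂ) * (r : ℝ)) / 2))
  rw [show (φ b * Complex.cos (2 * (a : ℂ) * z)
      + φ 0 * Complex.cosh (2 * (a : ℂ) * (r : ℝ))) / 2
      = φ b * (Complex.cos (2 * (a : ℂ) * z) / 2)
        + φ 0 * (Complex.cosh (2 * (a : ℂ) * (r : ℝ)) / 2) by ring]
  exact (funext key : (fun n : ℕ => c n * iteratedDeriv n f_a z) = _) ▸ hs
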